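/- Let 0 < c < τ*. Define the decision rule δ*(y) = exp(2cy)/(exp(2cy)+1). Then δ* is minimax optimal for mean square regret in the one-dimensional Gaussian problem with parameter space [−c,c]: for every measurable rule δ : ℝ → [0,1] one has sup_{τ∈[−c,c]} R(δ,τ) ≥ sup_{τ∈[−c,c]} R(δ*,τ), and moreover sup_{τ∈[−c,c]} R(δ*,τ) = c² ρ(c). -/

import Mathlib

open Real MeasureTheory

/-- The standard normal density. -/
noncomputable def gaussPdf (x : ℝ) : ℝ :=
  (Real.sqrt (2 * Real.pi))⁻¹ * Real.exp (-(x ^ 2) / 2)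

/-- ρ(a) = ∫ (1/(exp(2ay)+1))² φ(y−a) dy. -/
noncomputable def ρ (a : ℝ) : ℝ :=
  ∫ y : ℝ, (1 / (Real.exp (2 * a * y) + 1)) ^ 2 * gaussPdf (y - a)

/-- Mean square regret of a rule δ at parameter τ in the one-dimensional Gaussian
problem with unit variance. -/
noncomputable def R (δ : ℝ → ℝ) (τ : ℝ) : ℝ :=
  τ ^ 2 * ∫ y : ℝ, ((if 0 ≤ τ then (1 : ℝ) else 0) - δ y) ^ 2 * gaussPdf (y - τ)

namespace MSR

noncomputable def q (b y : ℝ) : ℝ := (Real.exp (2 * b * y) + 1)⁻¹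


lemma q_pos (b y : ℝ) : 0 < q b y := by
  have := Real.exp_pos (2 * b * y); unfold q; positivity

lemma q_le_one (b y : ℝ) : q b y ≤ 1 := by
  have h := Real.exp_pos (2 * b * y)
  rw [q, inv_le_one_iff₀]; right; linarith

lemma q_nonneg (b y : ℝ) : 0 ≤ q b y := (q_pos b y).le

lemma q_neg (b y : ℝ) : q b (-y) = 1 - q b y := by
  have h1 := (Real.exp_pos (2 * b * y)).ne'
  have h2 := Real.exp_pos (2 * b * y)
  rw [q, q, mul_neg, Real.exp_neg]
  field_simp
  ring

lemma continuous_q (b : ℝ) : Continuous (q b) := by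
  apply Continuous.inv₀ (by continuity)
  intro y; have := Real.exp_pos (2 * b * y); positivity

lemma gaussPdf_pos (x : ℝ) : 0 < gaussPdf x := by
  unfold gaussPdf
  have : 0 < Real.sqrt (2 * Real.pi) := Real.sqrt_pos.2 (by positivity)
  positivity

lemma gaussPdf_even (x : ℝ) : gaussPdf (-x) = gaussPdf x := by simp [gaussPdf]

lemma continuous_gaussPdf : Continuous gaussPdf := by unfold gaussPdf; continuity

lemma gaussPdf_eq (x : ℝ) : gaussPdf x = (Real.sqrt (2 * Real.pi))⁻¹ * Real.exp (-(2⁻¹ : ℝ) * x ^ 2) := by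
  rw [gaussPdf]; ring_nf

lemma integrable_gaussPdf : Integrable gaussPdf := by
  have : Integrable (fun x : ℝ => Real.exp (-(2⁻¹ : ℝ) * x ^ 2)) := integrable_exp_neg_mul_sq (by norm_num)
  have h := this.const_mul ((Real.sqrt (2 * Real.pi))⁻¹)
  apply h.congr
  filter_upwards with x
  rw [gaussPdf_eq]

lemma integral_gaussPdf : ∫ x, gaussPdf x = 1 := by
  have h : ∫ x : ℝ, Real.exp (-(2⁻¹ : ℝ) * x ^ 2) = Real.sqrt (Real.pi / 2⁻¹) := integral_gaussian 2⁻¹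
  have h2 : (Real.pi / (2⁻¹ : ℝ)) = 2 * Real.pi := by ring
  have hs : Real.sqrt (2 * Real.pi) ≠ 0 := by positivity
  calc ∫ x, gaussPdf x = (Real.sqrt (2 * Real.pi))⁻¹ * ∫ x : ℝ, Real.exp (-(2⁻¹ : ℝ) * x ^ 2) := by
        rw [← integral_const_mul]; congr 1; ext x; rw [gaussPdf_eq]
    _ = 1 := by rw [h, h2, inv_mul_cancel₀ hs]



lemma integrable_gauss_shift (t : ℝ) : Integrable (fun y => gaussPdf (y - t)) :=
  integrable_gaussPdf.comp_sub_right t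

/-- bounded a.e.-strongly-measurable times shifted gaussian is integrable -/
lemma integrable_bg {f : ℝ → ℝ} (hf : AEStronglyMeasurable f volume) {M : ℝ}
    (hb : ∀ y, |f y| ≤ M) (t : ℝ) :
    Integrable (fun y => f y * gaussPdf (y - t)) := by
  apply Integrable.mono' ((integrable_gauss_shift t).const_mul M)
    (hf.mul (integrable_gauss_shift t).1)
  filter_upwards with y
  show |f y * gaussPdf (y - t)| ≤ M * gaussPdf (y - t)
  rw [abs_mul, abs_of_pos (gaussPdf_pos _)]
  exact mul_le_mul_of_nonneg_right (hb y) (gaussPdf_pos _).le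

/-- |x| ≤ exp (x^2/4) -/
lemma abs_le_exp_sq (x : ℝ) : |x| ≤ Real.exp (x ^ 2 / 4) := by
  have h1 : |x| ≤ 1 + x ^ 2 / 4 := by rcases abs_cases x with ⟨h,_⟩|⟨h,_⟩ <;> nlinarith [sq_nonneg (x-2), sq_nonneg (x+2)]
  calc |x| ≤ 1 + x ^ 2 / 4 := h1
    _ ≤ Real.exp (x ^ 2 / 4) := by
        have := Real.add_one_le_exp (x ^ 2 / 4); linarith

lemma abs_mul_gaussPdf_le (x : ℝ) :
    |x * gaussPdf x| ≤ (Real.sqrt (2 * Real.pi))⁻¹ * Real.exp (-(x ^ 2) / 4) := by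
  have hs : (0:ℝ) < Real.sqrt (2 * Real.pi) := Real.sqrt_pos.2 (by positivity)
  have key : |x| * Real.exp (-(x ^ 2) / 2) ≤ Real.exp (-(x ^ 2) / 4) := by
    calc |x| * Real.exp (-(x ^ 2) / 2) ≤ Real.exp (x ^ 2 / 4) * Real.exp (-(x ^ 2) / 2) :=
          mul_le_mul_of_nonneg_right (abs_le_exp_sq x) (Real.exp_pos _).le
      _ = Real.exp (-(x ^ 2) / 4) := by rw [← Real.exp_add]; ring_nf
  rw [abs_mul, abs_of_pos (gaussPdf_pos _)]
  show |x| * ((Real.sqrt (2 * Real.pi))⁻¹ * Real.exp (-(x ^ 2) / 2)) ≤ _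
  have h2 : (0:ℝ) ≤ (Real.sqrt (2 * Real.pi))⁻¹ := by positivity
  calc |x| * ((Real.sqrt (2 * Real.pi))⁻¹ * Real.exp (-(x ^ 2) / 2))
      = (Real.sqrt (2 * Real.pi))⁻¹ * (|x| * Real.exp (-(x ^ 2) / 2)) := by ring
    _ ≤ (Real.sqrt (2 * Real.pi))⁻¹ * Real.exp (-(x ^ 2) / 4) :=
        mul_le_mul_of_nonneg_left key h2



noncomputable def A2 (b t : ℝ) : ℝ := ∫ y, q b y ^ 2 * gaussPdf (y - t)
noncomputable def A3 (b t : ℝ) : ℝ := ∫ y, q b y ^ 3 * gaussPdf (y - t)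

lemma hasDerivAt_gauss_shift (y t : ℝ) :
    HasDerivAt (fun s => gaussPdf (y - s)) ((y - t) * gaussPdf (y - t)) t := by
  have h1 : HasDerivAt (fun s : ℝ => y - s) (-1) t := (hasDerivAt_id t).const_sub y
  have h2 : HasDerivAt (fun s : ℝ => -((y - s) ^ 2) / 2) (y - t) t := by
    have := (h1.fun_pow 2).neg.div_const 2
    refine this.congr_deriv ?_
    symm
    simp only [Nat.cast_ofNat, pow_one]
    ring
  have h3 := h2.exp
  have h4 := h3.const_mul ((Real.sqrt (2 * Real.pi))⁻¹)
  have heq : (y - t) * gaussPdf (y - t)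
      = (Real.sqrt (2 * Real.pi))⁻¹ * (Real.exp (-((y - t) ^ 2) / 2) * (y - t)) := by
    simp [gaussPdf]; ring
  rw [heq]
  exact h4

lemma integrable_exp_shift_sq (a t : ℝ) (ha : 0 < a) :
    Integrable (fun y : ℝ => Real.exp (-((y - t) ^ 2) / a)) := by
  have : Integrable (fun x : ℝ => Real.exp (-a⁻¹ * x ^ 2)) := integrable_exp_neg_mul_sq (by positivity)
  have h2 := this.comp_sub_right t
  apply h2.congr
  filter_upwards with y
  congr 1
  ring

/-- integrable: bounded × (x * gaussPdf x) shifted -/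
lemma integrable_bg' {f : ℝ → ℝ} (hf : AEStronglyMeasurable f volume) {M : ℝ}
    (hb : ∀ y, |f y| ≤ M) (t : ℝ) :
    Integrable (fun y => f y * ((y - t) * gaussPdf (y - t))) := by
  have hint : Integrable (fun y : ℝ => M * ((Real.sqrt (2 * Real.pi))⁻¹ * Real.exp (-((y - t) ^ 2) / 4))) :=
    ((integrable_exp_shift_sq 4 t (by norm_num)).const_mul _).const_mul M
  have hm : AEStronglyMeasurable (fun y => f y * ((y - t) * gaussPdf (y - t))) volume := by
    apply hf.mul
    exact (((continuous_id.sub continuous_const).mul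
      (continuous_gaussPdf.comp (continuous_id.sub continuous_const))).aestronglyMeasurable)
  apply Integrable.mono' hint hm
  filter_upwards with y
  rw [Real.norm_eq_abs, abs_mul]
  have hMnn : 0 ≤ M := le_trans (abs_nonneg _) (hb y)
  apply mul_le_mul (hb y) (abs_mul_gaussPdf_le _) (abs_nonneg _) hMnn

lemma hasDerivAt_A2 (b t : ℝ) :
    HasDerivAt (A2 b) (∫ y, q b y ^ 2 * ((y - t) * gaussPdf (y - t))) t := by
  have qm : AEStronglyMeasurable (fun y => q b y ^ 2) volume :=
    ((continuous_q b).pow 2).aestronglyMeasurable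
  have qb : ∀ y, |q b y ^ 2| ≤ 1 := by
    intro y
    rw [abs_of_pos (pow_pos (q_pos b y) 2)]
    calc q b y ^ 2 ≤ 1 ^ 2 := pow_le_pow_left₀ (q_pos b y).le (q_le_one b y) 2
      _ = 1 := one_pow 2
  have key := hasDerivAt_integral_of_dominated_loc_of_deriv_le (μ := volume)
      (F := fun s y => q b y ^ 2 * gaussPdf (y - s))
      (F' := fun s y => q b y ^ 2 * ((y - s) * gaussPdf (y - s)))
      (x₀ := t)
      (bound := fun y => (Real.sqrt (2 * Real.pi))⁻¹ * Real.exp ((1:ℝ)/4) * Real.exp (-((y - t) ^ 2) / 8))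
      (s := Metric.ball t 1) (Metric.ball_mem_nhds t one_pos)
      (by filter_upwards with s
          exact (((continuous_q b).pow 2).mul
            (continuous_gaussPdf.comp (continuous_id.sub continuous_const))).aestronglyMeasurable)
      (integrable_bg qm qb t)
      ((((continuous_q b).pow 2).mul ((continuous_id.sub continuous_const).mul
          (continuous_gaussPdf.comp (continuous_id.sub continuous_const)))).aestronglyMeasurable)
      ?_ ?_ ?_
  · exact key.2
  · -- bound
    filter_upwards with y
    intro s hs
    rw [Metric.mem_ball, Real.dist_eq] at hs
    rw [Real.norm_eq_abs, abs_mul]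
    have h1 : |q b y ^ 2| * |(y - s) * gaussPdf (y - s)| ≤ 1 * |(y - s) * gaussPdf (y - s)| :=
      mul_le_mul_of_nonneg_right (qb y) (abs_nonneg _)
    have h2 : |(y - s) * gaussPdf (y - s)| ≤ (Real.sqrt (2 * Real.pi))⁻¹ * Real.exp (-((y - s) ^ 2) / 4) :=
      abs_mul_gaussPdf_le _
    have h3 : Real.exp (-((y - s) ^ 2) / 4) ≤ Real.exp ((1:ℝ)/4) * Real.exp (-((y - t) ^ 2) / 8) := by
      rw [← Real.exp_add]
      apply Real.exp_le_exp.2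
      nlinarith [sq_nonneg ((y - t) - 2*(s - t)), sq_nonneg (s - t), abs_nonneg (s - t), sq_abs (s - t), sq_nonneg (s-t)]
    have hsq : (s - t)^2 ≤ 1 := by
      have := abs_le.1 hs.le
      nlinarith [sq_abs (s - t)]
    calc |q b y ^ 2| * |(y - s) * gaussPdf (y - s)| ≤ |(y - s) * gaussPdf (y - s)| := by linarith
      _ ≤ (Real.sqrt (2 * Real.pi))⁻¹ * Real.exp (-((y - s) ^ 2) / 4) := h2
      _ ≤ (Real.sqrt (2 * Real.pi))⁻¹ * (Real.exp ((1:ℝ)/4) * Real.exp (-((y - t) ^ 2) / 8)) := by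
          apply mul_le_mul_of_nonneg_left _ (by positivity)
          rw [← Real.exp_add]
          apply Real.exp_le_exp.2
          nlinarith [sq_nonneg ((y-t) - 2*(s-t))]
      _ = (Real.sqrt (2 * Real.pi))⁻¹ * Real.exp ((1:ℝ)/4) * Real.exp (-((y - t) ^ 2) / 8) := by ring
  · exact ((integrable_exp_shift_sq 8 t (by norm_num)).const_mul _)
  · filter_upwards with y
    intro s _
    exact (hasDerivAt_gauss_shift y s).const_mul (q b y ^ 2)



lemma q_mul_sum (b y : ℝ) : q b y * (Real.exp (2 * b * y) + 1) = 1 := by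
  have h := Real.exp_pos (2 * b * y)
  rw [q]; field_simp

lemma hasDerivAt_q (b y : ℝ) :
    HasDerivAt (q b) (-(2 * b) * (Real.exp (2 * b * y) * q b y ^ 2)) y := by
  have h1 : HasDerivAt (fun y : ℝ => 2 * b * y) (2 * b) y := by
    simpa using (hasDerivAt_id y).const_mul (2 * b)
  have h2 : HasDerivAt (fun y : ℝ => Real.exp (2 * b * y) + 1) (Real.exp (2 * b * y) * (2 * b)) y :=
    (h1.exp).add_const 1
  have hne : Real.exp (2 * b * y) + 1 ≠ 0 := by positivity
  have h3 := h2.inv hne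
  refine h3.congr_deriv ?_
  symm
  rw [q]
  field_simp

lemma tendsto_gauss_shift_atTop (t : ℝ) :
    Filter.Tendsto (fun y => gaussPdf (y - t)) Filter.atTop (nhds 0) := by
  have h1 : Filter.Tendsto (fun y : ℝ => -((y - t) ^ 2) / 2) Filter.atTop Filter.atBot := by
    apply Filter.Tendsto.atBot_div_const (by norm_num : (0:ℝ) < 2)
    have h0 : Filter.Tendsto (fun y : ℝ => y - t) Filter.atTop Filter.atTop :=
      Filter.tendsto_atTop_add_const_right _ (-t) Filter.tendsto_id
    have hsq : Filter.Tendsto (fun y : ℝ => (y - t) ^ 2) Filter.atTop Filter.atTop :=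
      (Filter.tendsto_pow_atTop (by norm_num : (2:ℕ) ≠ 0)).comp h0
    exact Filter.tendsto_neg_atTop_atBot.comp hsq
  have h2 := (Real.tendsto_exp_atBot).comp h1
  have h3 := h2.const_mul ((Real.sqrt (2 * Real.pi))⁻¹)
  simpa [gaussPdf, Function.comp] using h3

lemma tendsto_gauss_shift_atBot (t : ℝ) :
    Filter.Tendsto (fun y => gaussPdf (y - t)) Filter.atBot (nhds 0) := by
  have h1 : Filter.Tendsto (fun y : ℝ => -((y - t) ^ 2) / 2) Filter.atBot Filter.atBot := by
    apply Filter.Tendsto.atBot_div_const (by norm_num : (0:ℝ) < 2)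
    have h0 : Filter.Tendsto (fun y : ℝ => t - y) Filter.atBot Filter.atTop := by
      apply Filter.tendsto_atTop_add_const_left
      exact Filter.tendsto_neg_atBot_atTop
    have hsq : Filter.Tendsto (fun y : ℝ => (t - y) ^ 2) Filter.atBot Filter.atTop :=
      (Filter.tendsto_pow_atTop (by norm_num : (2:ℕ) ≠ 0)).comp h0
    have heq : (fun y : ℝ => -((y - t) ^ 2)) = fun y : ℝ => -((t - y) ^ 2) := by
      funext y; ring
    rw [heq]
    exact Filter.tendsto_neg_atTop_atBot.comp hsq
  have h2 := (Real.tendsto_exp_atBot).comp h1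
  have h3 := h2.const_mul ((Real.sqrt (2 * Real.pi))⁻¹)
  simpa [gaussPdf, Function.comp] using h3

lemma tendsto_u_atTop (b t : ℝ) :
    Filter.Tendsto (fun y => q b y ^ 2 * gaussPdf (y - t)) Filter.atTop (nhds 0) := by
  apply squeeze_zero (fun y => mul_nonneg (pow_nonneg (q_pos b y).le 2) (gaussPdf_pos _).le)
    (g := fun y => gaussPdf (y - t)) (fun y => ?_) (tendsto_gauss_shift_atTop t)
  calc q b y ^ 2 * gaussPdf (y - t) ≤ 1 * gaussPdf (y - t) := by
        apply mul_le_mul_of_nonneg_right _ (gaussPdf_pos _).le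
        calc q b y ^ 2 ≤ 1 ^ 2 := pow_le_pow_left₀ (q_pos b y).le (q_le_one b y) 2
          _ = 1 := one_pow 2
    _ = gaussPdf (y - t) := one_mul _

lemma tendsto_u_atBot (b t : ℝ) :
    Filter.Tendsto (fun y => q b y ^ 2 * gaussPdf (y - t)) Filter.atBot (nhds 0) := by
  apply squeeze_zero (fun y => mul_nonneg (pow_nonneg (q_pos b y).le 2) (gaussPdf_pos _).le)
    (g := fun y => gaussPdf (y - t)) (fun y => ?_) (tendsto_gauss_shift_atBot t)
  calc q b y ^ 2 * gaussPdf (y - t) ≤ 1 * gaussPdf (y - t) := by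
        apply mul_le_mul_of_nonneg_right _ (gaussPdf_pos _).le
        calc q b y ^ 2 ≤ 1 ^ 2 := pow_le_pow_left₀ (q_pos b y).le (q_le_one b y) 2
          _ = 1 := one_pow 2
    _ = gaussPdf (y - t) := one_mul _

lemma hasDerivAt_gauss_shift_y (t y : ℝ) :
    HasDerivAt (fun y => gaussPdf (y - t)) (-(y - t) * gaussPdf (y - t)) y := by
  have h1 : HasDerivAt (fun z : ℝ => z - t) 1 y := (hasDerivAt_id y).sub_const t
  have h2 : HasDerivAt (fun z : ℝ => -((z - t) ^ 2) / 2) (-(y - t)) y := by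
    have := (h1.fun_pow 2).neg.div_const 2
    refine this.congr_deriv ?_
    symm
    simp only [Nat.cast_ofNat, pow_one]
    ring
  have h4 := (h2.exp).const_mul ((Real.sqrt (2 * Real.pi))⁻¹)
  have heq : -(y - t) * gaussPdf (y - t)
      = (Real.sqrt (2 * Real.pi))⁻¹ * (Real.exp (-((y - t) ^ 2) / 2) * -(y - t)) := by
    simp [gaussPdf]; ring
  rw [heq]
  exact h4

lemma hasDerivAt_u (b t y : ℝ) :
    HasDerivAt (fun y => q b y ^ 2 * gaussPdf (y - t))
      ((-(4 * b)) * ((q b y ^ 2 - q b y ^ 3) * gaussPdf (y - t))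
        - q b y ^ 2 * ((y - t) * gaussPdf (y - t))) y := by
  have hq2 : HasDerivAt (fun y => q b y ^ 2)
      (2 * q b y ^ 1 * (-(2 * b) * (Real.exp (2 * b * y) * q b y ^ 2))) y := by
    have := (hasDerivAt_q b y).fun_pow 2
    simpa using this
  have hprod := hq2.mul (hasDerivAt_gauss_shift_y t y)
  refine hprod.congr_deriv ?_
  symm
  have hqe := q_mul_sum b y
  set Q := q b y
  set E := Real.exp (2 * b * y)
  set G := gaussPdf (y - t)
  linear_combination (4 * b * G * Q ^ 2) * hqe

lemma integral_u'_eq_zero (b t : ℝ) :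
    ∫ y, ((-(4 * b)) * ((q b y ^ 2 - q b y ^ 3) * gaussPdf (y - t))
        - q b y ^ 2 * ((y - t) * gaussPdf (y - t))) = 0 := by
  set u := fun y => q b y ^ 2 * gaussPdf (y - t) with hu
  set w := fun y => ((-(4 * b)) * ((q b y ^ 2 - q b y ^ 3) * gaussPdf (y - t))
        - q b y ^ 2 * ((y - t) * gaussPdf (y - t))) with hw
  have hwint : Integrable w := by
    apply Integrable.sub
    · have : ∀ y, ((-(4 * b)) * ((q b y ^ 2 - q b y ^ 3) * gaussPdf (y - t)))
          = ((-(4 * b)) * (q b y ^ 2 - q b y ^ 3)) * gaussPdf (y - t) := fun y => by ring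
      simp_rw [this]
      apply integrable_bg (M := 4 * |b| * 2)
      · exact (((continuous_const.mul (((continuous_q b).pow 2).sub
          ((continuous_q b).pow 3))))).aestronglyMeasurable
      · intro y
        rw [abs_mul]
        have h1 : |(-(4 * b))| = 4 * |b| := by rw [abs_neg, abs_mul]; simp [abs_of_nonneg]
        rw [h1]
        apply mul_le_mul_of_nonneg_left _ (by positivity)
        have h2 := q_pos b y
        have h3 := q_le_one b y
        rw [abs_le]
        constructor <;> nlinarith [pow_pos h2 2, pow_pos h2 3, pow_le_one₀ h2.le h3 (n := 2), pow_le_one₀ h2.le h3 (n := 3)]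
    · apply integrable_bg' (M := 1)
      · exact ((continuous_q b).pow 2).aestronglyMeasurable
      · intro y
        rw [abs_of_pos (pow_pos (q_pos b y) 2)]
        exact pow_le_one₀ (q_pos b y).le (q_le_one b y)
  have hderiv : ∀ y, HasDerivAt u (w y) y := fun y => hasDerivAt_u b t y
  have hcont : Continuous u := ((continuous_q b).pow 2).mul
    (continuous_gaussPdf.comp (continuous_id.sub continuous_const))
  have hIic : ∫ y in Set.Iic (0:ℝ), w y = u 0 - 0 := by
    apply integral_Iic_of_hasDerivAt_of_tendsto (hcont.continuousWithinAt)
      (fun x _ => hderiv x) (hwint.integrableOn) (tendsto_u_atBot b t)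
  have hIoi : ∫ y in Set.Ioi (0:ℝ), w y = 0 - u 0 := by
    apply integral_Ioi_of_hasDerivAt_of_tendsto (hcont.continuousWithinAt)
      (fun x _ => hderiv x) (hwint.integrableOn) (tendsto_u_atTop b t)
  have hsplit := intervalIntegral.integral_Iic_add_Ioi (b := (0:ℝ)) (hwint.integrableOn) (hwint.integrableOn)
  rw [hIic, hIoi] at hsplit
  rw [← hsplit]
  ring

lemma D_eq (b t : ℝ) :
    ∫ y, q b y ^ 2 * ((y - t) * gaussPdf (y - t)) = -(4 * b) * (A2 b t - A3 b t) := by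
  have h0 := integral_u'_eq_zero b t
  have hint1 : Integrable (fun y => (-(4 * b)) * ((q b y ^ 2 - q b y ^ 3) * gaussPdf (y - t))) := by
    have : ∀ y, ((-(4 * b)) * ((q b y ^ 2 - q b y ^ 3) * gaussPdf (y - t)))
        = ((-(4 * b)) * (q b y ^ 2 - q b y ^ 3)) * gaussPdf (y - t) := fun y => by ring
    simp_rw [this]
    apply integrable_bg (M := 4 * |b| * 2)
    · exact (((continuous_const.mul (((continuous_q b).pow 2).sub
        ((continuous_q b).pow 3))))).aestronglyMeasurable
    · intro y
      rw [abs_mul]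
      have h1 : |(-(4 * b))| = 4 * |b| := by rw [abs_neg, abs_mul]; simp [abs_of_nonneg]
      rw [h1]
      apply mul_le_mul_of_nonneg_left _ (by positivity)
      have h2 := q_pos b y
      have h3 := q_le_one b y
      rw [abs_le]
      constructor <;> nlinarith [pow_pos h2 2, pow_pos h2 3, pow_le_one₀ h2.le h3 (n := 2), pow_le_one₀ h2.le h3 (n := 3)]
  have hint2 : Integrable (fun y => q b y ^ 2 * ((y - t) * gaussPdf (y - t))) := by
    apply integrable_bg' (M := 1)
    · exact ((continuous_q b).pow 2).aestronglyMeasurable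
    · intro y
      rw [abs_of_pos (pow_pos (q_pos b y) 2)]
      exact pow_le_one₀ (q_pos b y).le (q_le_one b y)
  rw [integral_sub hint1 hint2] at h0
  have h2 : ∫ y, (-(4 * b)) * ((q b y ^ 2 - q b y ^ 3) * gaussPdf (y - t))
      = -(4 * b) * (A2 b t - A3 b t) := by
    rw [integral_const_mul]
    congr 1
    have hq2 : Integrable (fun y => q b y ^ 2 * gaussPdf (y - t)) := by
      apply integrable_bg (M := 1)
      · exact ((continuous_q b).pow 2).aestronglyMeasurable
      · intro y
        rw [abs_of_pos (pow_pos (q_pos b y) 2)]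
        exact pow_le_one₀ (q_pos b y).le (q_le_one b y)
    have hq3 : Integrable (fun y => q b y ^ 3 * gaussPdf (y - t)) := by
      apply integrable_bg (M := 1)
      · exact ((continuous_q b).pow 3).aestronglyMeasurable
      · intro y
        rw [abs_of_pos (pow_pos (q_pos b y) 3)]
        exact pow_le_one₀ (q_pos b y).le (q_le_one b y)
    have : ∀ y, (q b y ^ 2 - q b y ^ 3) * gaussPdf (y - t)
        = q b y ^ 2 * gaussPdf (y - t) - q b y ^ 3 * gaussPdf (y - t) := fun y => by ring
    simp_rw [this]
    rw [integral_sub hq2 hq3]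
    rfl
  rw [h2] at h0
  linarith




lemma q_anti {b : ℝ} (hb : 0 < b) {x y : ℝ} (hxy : x ≤ y) : q b y ≤ q b x := by
  apply inv_anti₀ (by positivity)
  have : 2 * b * x ≤ 2 * b * y := by nlinarith
  linarith [Real.exp_le_exp.2 this]

lemma gauss_cross {σ τ x y : ℝ} (hst : σ ≤ τ) (hxy : x ≤ y) :
    gaussPdf (x - τ) * gaussPdf (y - σ) ≤ gaussPdf (x - σ) * gaussPdf (y - τ) := by
  unfold gaussPdf
  have hs : (0:ℝ) < (Real.sqrt (2 * Real.pi))⁻¹ := by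
    have : 0 < Real.sqrt (2 * Real.pi) := Real.sqrt_pos.2 (by positivity)
    positivity
  have h1 : ∀ u v : ℝ, ((Real.sqrt (2 * Real.pi))⁻¹ * Real.exp (-(u ^ 2) / 2)) *
      ((Real.sqrt (2 * Real.pi))⁻¹ * Real.exp (-(v ^ 2) / 2))
      = ((Real.sqrt (2 * Real.pi))⁻¹ * (Real.sqrt (2 * Real.pi))⁻¹) *
        Real.exp ((-(u ^ 2) / 2) + (-(v ^ 2) / 2)) := by
    intro u v; rw [Real.exp_add]; ring
  rw [h1, h1]
  apply mul_le_mul_of_nonneg_left _ (by positivity)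
  apply Real.exp_le_exp.2
  nlinarith

lemma integrable_qpow_g (b : ℝ) (n : ℕ) (t : ℝ) :
    Integrable (fun y => q b y ^ n * gaussPdf (y - t)) := by
  apply integrable_bg (M := 1)
  · exact ((continuous_q b).pow n).aestronglyMeasurable
  · intro y
    rw [abs_of_pos (pow_pos (q_pos b y) n)]
    exact pow_le_one₀ (q_pos b y).le (q_le_one b y)

/-- Monotone likelihood ratio correlation inequality. -/
lemma mlr {b : ℝ} (hb : 0 < b) {σ τ : ℝ} (hst : σ ≤ τ) :
    A3 b τ * A2 b σ ≤ A3 b σ * A2 b τ := by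
  set f1 := fun x => q b x ^ 3 * gaussPdf (x - τ) with hf1
  set g1 := fun y => q b y ^ 2 * gaussPdf (y - σ) with hg1
  set f2 := fun x => q b x ^ 3 * gaussPdf (x - σ) with hf2
  set g2 := fun y => q b y ^ 2 * gaussPdf (y - τ) with hg2
  have if1 : Integrable f1 := integrable_qpow_g b 3 τ
  have ig1 : Integrable g1 := integrable_qpow_g b 2 σ
  have if2 : Integrable f2 := integrable_qpow_g b 3 σ
  have ig2 : Integrable g2 := integrable_qpow_g b 2 τ
  set F := fun z : ℝ × ℝ => f1 z.1 * g1 z.2 - f2 z.1 * g2 z.2 with hF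
  have hFint : Integrable F (volume.prod volume) := (if1.mul_prod ig1).sub (if2.mul_prod ig2)
  have hFswapint : Integrable (fun z : ℝ × ℝ => F z.swap) (volume.prod volume) := by
    have : (fun z : ℝ × ℝ => F z.swap)
        = fun z : ℝ × ℝ => g1 z.1 * f1 z.2 - g2 z.1 * f2 z.2 := by
      funext z; simp [hF, Prod.swap]; ring
    rw [this]
    exact (ig1.mul_prod if1).sub (ig2.mul_prod if2)
  have key : A3 b τ * A2 b σ - A3 b σ * A2 b τ = ∫ z, F z ∂(volume.prod volume) := by
    rw [hF]
    rw [integral_sub (if1.mul_prod ig1) (if2.mul_prod ig2)]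
    rw [integral_prod_mul, integral_prod_mul]
    rfl
  have swap_eq : ∫ z, F z.swap ∂(volume.prod volume) = ∫ z, F z ∂(volume.prod volume) :=
    integral_prod_swap F
  have hsum : (2:ℝ) * ∫ z, F z ∂(volume.prod volume)
      = ∫ z, (F z + F z.swap) ∂(volume.prod volume) := by
    rw [integral_add hFint hFswapint, swap_eq]; ring
  have hptwise : ∀ z : ℝ × ℝ, F z + F z.swap ≤ 0 := by
    rintro ⟨x, y⟩
    have hexpand : F (x, y) + F (x, y).swap
        = (q b x ^ 2 * q b y ^ 2) * ((q b x - q b y) *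
            (gaussPdf (x - τ) * gaussPdf (y - σ) - gaussPdf (x - σ) * gaussPdf (y - τ))) := by
      simp only [hF, hf1, hg1, hf2, hg2, Prod.swap]
      ring
    rw [hexpand]
    apply mul_nonpos_of_nonneg_of_nonpos (by positivity)
    rcases le_total x y with hxy | hxy
    · apply mul_nonpos_of_nonneg_of_nonpos
      · have := q_anti hb hxy; linarith
      · have := gauss_cross hst hxy; linarith
    · apply mul_nonpos_of_nonpos_of_nonneg
      · have := q_anti hb hxy; linarith
      · have := gauss_cross hst hxy; linarith
  have hle : ∫ z, (F z + F z.swap) ∂(volume.prod volume) ≤ 0 :=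
    integral_nonpos fun z => hptwise z
  nlinarith [key, hsum, hle]



lemma abs_sq_le_one {s : ℝ} (h0 : 0 ≤ s) (h1 : s ≤ 1) : |s ^ 2| ≤ 1 := by
  rw [abs_of_nonneg (by positivity)]
  calc s ^ 2 ≤ 1 ^ 2 := pow_le_pow_left₀ h0 h1 2
    _ = 1 := one_pow 2

lemma integrable_one_sub_q_sq (r t : ℝ) :
    Integrable (fun y => (1 - q r y) ^ 2 * gaussPdf (y - t)) := by
  apply integrable_bg (M := 1)
  · exact ((continuous_const.sub (continuous_q r)).pow 2).aestronglyMeasurable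
  · intro y
    exact abs_sq_le_one (by linarith [q_le_one r y]) (by linarith [q_pos r y])

/-- reflection: ∫ (1-q r y)² φ(y−t) dy = A2 r (−t) -/
lemma refl2 (r t : ℝ) : ∫ y, (1 - q r y) ^ 2 * gaussPdf (y - t) = A2 r (-t) := by
  have h := integral_neg_eq_self (fun y => (1 - q r y) ^ 2 * gaussPdf (y - t)) volume
  rw [← h, A2]
  congr 1
  funext y
  rw [q_neg]
  have : -y - t = -(y + t) := by ring
  rw [this, gaussPdf_even]
  have h2 : y + t = y - (-t) := by ring
  rw [h2]
  ring_nf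

/-- pair representation -/
lemma pair_repr (r t : ℝ) :
    2 * A2 r t = ∫ y, (q r y ^ 2 * gaussPdf (y - t) + (1 - q r y) ^ 2 * gaussPdf (y + t)) := by
  have h1 : ∫ y, (1 - q r y) ^ 2 * gaussPdf (y + t) = A2 r t := by
    have := refl2 r (-t)
    simp only [neg_neg] at this
    rw [← this]
    congr 1
    funext y
    rw [sub_neg_eq_add]
  rw [integral_add (integrable_qpow_g r 2 t) ?_]
  · rw [h1]; rw [A2]; ring
  · have := integrable_one_sub_q_sq r (-t)
    apply this.congr
    filter_upwards with y
    rw [sub_neg_eq_add]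

/-- gaussian likelihood ratio identity -/
lemma gauss_ratio (t y : ℝ) :
    gaussPdf (y - t) = Real.exp (2 * t * y) * gaussPdf (y + t) := by
  unfold gaussPdf
  rw [mul_comm (Real.exp (2 * t * y)), mul_assoc, ← Real.exp_add]
  congr 1
  ring

/-- q t y is the Bayes weight -/
lemma q_weight (t y : ℝ) :
    q t y * (gaussPdf (y - t) + gaussPdf (y + t)) = gaussPdf (y + t) := by
  rw [gauss_ratio t y, q]
  have h := Real.exp_pos (2 * t * y)
  field_simp

/-- quadratic minimization: the Bayes weight minimizes s²A + (1−s)²B -/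
lemma quad_min {A B s sbar : ℝ} (hA : 0 < A) (hB : 0 < B) (hrel : sbar * (A + B) = B) :
    sbar ^ 2 * A + (1 - sbar) ^ 2 * B ≤ s ^ 2 * A + (1 - s) ^ 2 * B := by
  nlinarith [mul_nonneg (by linarith : (0:ℝ) ≤ A + B) (sq_nonneg (s - sbar)), sq_nonneg (s - sbar)]

/-- the key scale-comparison: A2 t t ≤ A2 r t for every r -/
lemma A2_self_le (r t : ℝ) : A2 t t ≤ A2 r t := by
  have hptwise : ∀ y, q t y ^ 2 * gaussPdf (y - t) + (1 - q t y) ^ 2 * gaussPdf (y + t)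
      ≤ q r y ^ 2 * gaussPdf (y - t) + (1 - q r y) ^ 2 * gaussPdf (y + t) := by
    intro y
    exact quad_min (gaussPdf_pos _) (gaussPdf_pos _) (q_weight t y)
  have hint : ∀ s : ℝ, Integrable (fun y =>
      q s y ^ 2 * gaussPdf (y - t) + (1 - q s y) ^ 2 * gaussPdf (y + t)) := by
    intro s
    apply (integrable_qpow_g s 2 t).add
    have := integrable_one_sub_q_sq s (-t)
    apply this.congr
    filter_upwards with y
    rw [sub_neg_eq_add]
  have := integral_mono (hint t) (hint r) hptwise
  rw [← pair_repr, ← pair_repr] at this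
  linarith


lemma rho_eq (a : ℝ) : ρ a = A2 a a := by
  unfold ρ A2 q
  congr 1
  funext y
  rw [one_div]

lemma A2_pos (b t : ℝ) : 0 < A2 b t := by
  rw [A2]
  apply (integral_pos_iff_support_of_nonneg_ae ?_ (integrable_qpow_g b 2 t)).2
  · have : (Function.support fun y => q b y ^ 2 * gaussPdf (y - t)) = Set.univ := by
      apply Set.eq_univ_of_forall
      intro y
      simp only [Function.mem_support]
      exact (mul_pos (pow_pos (q_pos b y) 2) (gaussPdf_pos _)).ne'
    rw [this]
    simp
  · filter_upwards with y
    exact (mul_pos (pow_pos (q_pos b y) 2) (gaussPdf_pos _)).le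

lemma A3_nonneg (b t : ℝ) : 0 ≤ A3 b t := by
  rw [A3]
  apply integral_nonneg
  intro y
  exact (mul_pos (pow_pos (q_pos b y) 3) (gaussPdf_pos _)).le

lemma A3_le_A2 (b t : ℝ) : A3 b t ≤ A2 b t := by
  apply integral_mono (integrable_qpow_g b 3 t) (integrable_qpow_g b 2 t)
  intro y
  apply mul_le_mul_of_nonneg_right _ (gaussPdf_pos _).le
  apply pow_le_pow_of_le_one (q_pos b y).le (q_le_one b y)
  norm_num

/-- the sign function driving monotonicity -/
noncomputable def E (b t : ℝ) : ℝ := A2 b t - 2 * b * t * (A2 b t - A3 b t)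

lemma hasDerivAt_h (c t : ℝ) :
    HasDerivAt (fun τ => τ ^ 2 * A2 c τ) (2 * t * E c t) t := by
  have h1 : HasDerivAt (fun τ : ℝ => τ ^ 2) (2 * t) t := by
    simpa using (hasDerivAt_id t).fun_pow 2
  have h2 := (hasDerivAt_A2 c t)
  have h3 := h1.mul h2
  rw [D_eq] at h3
  refine h3.congr_deriv ?_
  symm
  rw [E]
  ring

/-- forward propagation: if E c c ≥ 0 then E c σ ≥ 0 for 0 < σ ≤ c -/
lemma E_forward {b σ c : ℝ} (hb : 0 < b) (hσ : 0 < σ) (hσc : σ ≤ c) (hE : 0 ≤ E b c) :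
    0 ≤ E b σ := by
  have h1 := mlr hb hσc
  have h2 := A2_pos b σ
  have h3 := A2_pos b c
  have h4 := A3_le_A2 b σ
  have h5 := A3_le_A2 b c
  have h6 := A3_nonneg b σ
  have h7 := A3_nonneg b c
  rw [E] at hE ⊢
  have key : 2 * b * σ * (A2 b σ - A3 b σ) * A2 b c ≤ A2 b σ * A2 b c := by
    calc 2 * b * σ * (A2 b σ - A3 b σ) * A2 b c
        = 2 * b * σ * (A2 b σ * A2 b c - A3 b σ * A2 b c) := by ring
      _ ≤ 2 * b * σ * (A2 b σ * A2 b c - A3 b c * A2 b σ) := by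
          apply mul_le_mul_of_nonneg_left _ (by positivity)
          nlinarith [mlr hb hσc]
      _ = 2 * b * σ * (A2 b σ * (A2 b c - A3 b c)) := by ring
      _ ≤ 2 * b * c * (A2 b σ * (A2 b c - A3 b c)) := by
          apply mul_le_mul_of_nonneg_right _ (by nlinarith)
          nlinarith
      _ = A2 b σ * (2 * b * c * (A2 b c - A3 b c)) := by ring
      _ ≤ A2 b σ * A2 b c := by
          apply mul_le_mul_of_nonneg_left _ h2.le
          linarith
  nlinarith
/-- backward propagation: if E c c < 0 then E c τ < 0 for τ ≥ c > 0 -/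
lemma E_backward {b c τ : ℝ} (hb : 0 < b) (hc : 0 < c) (hcτ : c ≤ τ) (hE : E b c < 0) :
    E b τ < 0 := by
  have h2 := A2_pos b τ
  have h3 := A2_pos b c
  have h4 := A3_le_A2 b τ
  have h5 := A3_le_A2 b c
  have h6 := A3_nonneg b τ
  have h7 := A3_nonneg b c
  rw [E] at hE ⊢
  have key : A2 b τ * A2 b c < 2 * b * τ * (A2 b τ - A3 b τ) * A2 b c := by
    calc A2 b τ * A2 b c < A2 b τ * (2 * b * c * (A2 b c - A3 b c)) := by nlinarith
      _ = 2 * b * c * (A2 b c - A3 b c) * A2 b τ := by ring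
      _ ≤ 2 * b * c * (A2 b τ - A3 b τ) * A2 b c := by
          nlinarith [mul_le_mul_of_nonneg_left (mlr hb hcτ) (by positivity : (0:ℝ) ≤ 2 * b * c)]
      _ ≤ 2 * b * τ * (A2 b τ - A3 b τ) * A2 b c := by
          apply mul_le_mul_of_nonneg_right _ h3.le
          apply mul_le_mul_of_nonneg_right _ (by linarith : (0:ℝ) ≤ A2 b τ - A3 b τ)
          nlinarith
  nlinarith

section Main
variable {τstar c : ℝ}

lemma main_mono (hτmax : ∀ τ : ℝ, 0 ≤ τ → τ ^ 2 * ρ τ ≤ τstar ^ 2 * ρ τstar)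
    (hc0 : 0 < c) (hc : c < τstar) {τ : ℝ} (h0τ : 0 ≤ τ) (hτc : τ ≤ c) :
    τ ^ 2 * A2 c τ ≤ c ^ 2 * A2 c c := by
  set h : ℝ → ℝ := fun τ => τ ^ 2 * A2 c τ with hh
  have hdiff : ∀ t, HasDerivAt h (2 * t * E c t) t := fun t => hasDerivAt_h c t
  have hcont : Continuous h := by
    have : Differentiable ℝ h := fun t => (hdiff t).differentiableAt
    exact this.continuous
  have hEcc : 0 ≤ E c c := by
    by_contra hneg
    push_neg at hneg
    have hanti : StrictAntiOn h (Set.Icc c τstar) := by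
      apply strictAntiOn_of_deriv_neg (convex_Icc c τstar) hcont.continuousOn
      intro x hx
      rw [interior_Icc] at hx
      rw [(hdiff x).deriv]
      have hEx : E c x < 0 := E_backward hc0 hc0 hx.1.le hneg
      have hx0 : 0 < x := lt_trans hc0 hx.1
      nlinarith
    have hlt : h τstar < h c :=
      hanti (Set.left_mem_Icc.2 hc.le) (Set.right_mem_Icc.2 hc.le) hc
    have hub : h c ≤ h τstar := by
      have e1 : h c = c ^ 2 * ρ c := by rw [hh, rho_eq]
      have e2 : τstar ^ 2 * ρ τstar ≤ h τstar := by
        rw [rho_eq, hh]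
        exact mul_le_mul_of_nonneg_left (A2_self_le c τstar) (sq_nonneg τstar)
      calc h c = c ^ 2 * ρ c := e1
        _ ≤ τstar ^ 2 * ρ τstar := hτmax c hc0.le
        _ ≤ h τstar := e2
    linarith
  have hmono : MonotoneOn h (Set.Icc 0 c) := by
    apply monotoneOn_of_deriv_nonneg (convex_Icc 0 c) hcont.continuousOn
    · intro x _
      exact (hdiff x).differentiableAt.differentiableWithinAt
    · intro x hx
      rw [interior_Icc] at hx
      rw [(hdiff x).deriv]
      have hEx : 0 ≤ E c x := E_forward hc0 hx.1 hx.2.le hEcc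
      nlinarith [hx.1.le]
  exact hmono ⟨h0τ, hτc⟩ ⟨hc0.le, le_refl c⟩ hτc

end Main

end MSR

/-- If 0 < c < τ*, the rule δ*(y) = exp(2cy)/(exp(2cy)+1) is minimax optimal for
mean square regret over τ ∈ [−c,c], with worst-case regret c²ρ(c). -/
theorem stmt_1 (τstar c : ℝ) (hτ0 : 0 ≤ τstar)
    (hτmax : ∀ τ : ℝ, 0 ≤ τ → τ ^ 2 * ρ τ ≤ τstar ^ 2 * ρ τstar)
    (hc0 : 0 < c) (hc : c < τstar)
    (δstar : ℝ → ℝ)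
    (hδstar : ∀ y, δstar y = Real.exp (2 * c * y) / (Real.exp (2 * c * y) + 1)) :
    (∀ δ : ℝ → ℝ, Measurable δ → (∀ y, δ y ∈ Set.Icc (0 : ℝ) 1) →
      (⨆ τ : Set.Icc (-c) c, R δstar τ) ≤ ⨆ τ : Set.Icc (-c) c, R δ τ) ∧
    (⨆ τ : Set.Icc (-c) c, R δstar τ) = c ^ 2 * ρ c := by
  haveI : Nonempty (Set.Icc (-c) c) := ⟨⟨c, ⟨by linarith, le_refl c⟩⟩⟩
  -- basic identities for δstar
  have hone_sub : ∀ y, 1 - δstar y = MSR.q c y := by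
    intro y
    rw [hδstar y, MSR.q]
    have h := Real.exp_pos (2 * c * y)
    field_simp
    ring
  have hδstar_eq : ∀ y, δstar y = 1 - MSR.q c y := by
    intro y; have := hone_sub y; linarith
  -- value of R δstar at τ ≥ 0
  have hRpos : ∀ τ : ℝ, 0 ≤ τ → R δstar τ = τ ^ 2 * MSR.A2 c τ := by
    intro τ hτ
    rw [R, if_pos hτ, MSR.A2]
    congr 1
    apply integral_congr_ae
    filter_upwards with y
    rw [hone_sub y]
  -- value of R δstar at τ < 0
  have hRneg : ∀ τ : ℝ, τ < 0 → R δstar τ = (-τ) ^ 2 * MSR.A2 c (-τ) := by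
    intro τ hτ
    rw [R, if_neg (by linarith)]
    have h1 : (∫ y : ℝ, ((0:ℝ) - δstar y) ^ 2 * gaussPdf (y - τ))
        = ∫ y : ℝ, (1 - MSR.q c y) ^ 2 * gaussPdf (y - τ) := by
      apply integral_congr_ae
      filter_upwards with y
      rw [hδstar_eq y]
      ring_nf
    rw [h1, MSR.refl2 c τ]
    ring
  -- upper bound for R δstar on the interval
  have hupper : ∀ τ : ℝ, -c ≤ τ → τ ≤ c → R δstar τ ≤ c ^ 2 * ρ c := by
    intro τ h1 h2
    rw [MSR.rho_eq]
    rcases le_or_gt 0 τ with h0 | h0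
    · rw [hRpos τ h0]
      exact MSR.main_mono hτmax hc0 hc h0 h2
    · rw [hRneg τ h0]
      exact MSR.main_mono hτmax hc0 hc (by linarith) (by linarith)
  have hat_c : R δstar c = c ^ 2 * ρ c := by
    rw [hRpos c hc0.le, MSR.rho_eq]
  -- part 2
  have part2 : (⨆ τ : Set.Icc (-c) c, R δstar τ) = c ^ 2 * ρ c := by
    apply le_antisymm
    · apply ciSup_le
      rintro ⟨τ, hτ⟩
      exact hupper τ hτ.1 hτ.2
    · have hbdd : BddAbove (Set.range fun τ : Set.Icc (-c) c => R δstar τ) := by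
        refine ⟨c ^ 2 * ρ c, ?_⟩
        rintro x ⟨⟨τ, hτ⟩, rfl⟩
        exact hupper τ hτ.1 hτ.2
      have := le_ciSup hbdd (⟨c, ⟨by linarith, le_refl c⟩⟩ : Set.Icc (-c) c)
      rwa [hat_c] at this
  refine ⟨?_, part2⟩
  -- part 1
  intro δ hδm hδr
  rw [part2]
  -- bound on R δ over the interval
  have hRbound : ∀ τ : ℝ, -c ≤ τ → τ ≤ c → R δ τ ≤ c ^ 2 := by
    intro τ h1 h2
    rw [R]
    have hint : Integrable (fun y => ((if 0 ≤ τ then (1:ℝ) else 0) - δ y) ^ 2 * gaussPdf (y - τ)) := by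
      apply MSR.integrable_bg (M := 1) _ _ τ
      · apply AEStronglyMeasurable.pow
        exact (measurable_const.sub hδm).aestronglyMeasurable
      · intro y
        have := (hδr y).1; have := (hδr y).2
        split_ifs with hs
        · exact MSR.abs_sq_le_one (by linarith) (by linarith)
        · rw [show ((0:ℝ) - δ y) ^ 2 = (δ y) ^ 2 by ring]
          exact MSR.abs_sq_le_one (by linarith) (by linarith)
    have hIle : (∫ y : ℝ, ((if 0 ≤ τ then (1:ℝ) else 0) - δ y) ^ 2 * gaussPdf (y - τ)) ≤ 1 := by
      have hmono := integral_mono hint (MSR.integrable_gauss_shift τ) ?_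
      · calc (∫ y : ℝ, ((if 0 ≤ τ then (1:ℝ) else 0) - δ y) ^ 2 * gaussPdf (y - τ))
            ≤ ∫ y : ℝ, gaussPdf (y - τ) := hmono
          _ = ∫ y : ℝ, gaussPdf y := integral_sub_right_eq_self gaussPdf τ
          _ = 1 := MSR.integral_gaussPdf
      · intro y
        have h3 := (hδr y).1; have h4 := (hδr y).2
        have h5 : ((if 0 ≤ τ then (1:ℝ) else 0) - δ y) ^ 2 ≤ 1 := by
          split_ifs with hs <;> nlinarith
        show ((if 0 ≤ τ then (1:ℝ) else 0) - δ y) ^ 2 * gaussPdf (y - τ) ≤ gaussPdf (y - τ)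
        nlinarith [MSR.gaussPdf_pos (y - τ)]
    have hInn : 0 ≤ (∫ y : ℝ, ((if 0 ≤ τ then (1:ℝ) else 0) - δ y) ^ 2 * gaussPdf (y - τ)) := by
      apply integral_nonneg
      intro y
      have := MSR.gaussPdf_pos (y - τ)
      positivity
    have hτsq : τ ^ 2 ≤ c ^ 2 := sq_le_sq' h1 h2
    nlinarith [sq_nonneg τ]
  have hbdd : BddAbove (Set.range fun τ : Set.Icc (-c) c => R δ τ) := by
    refine ⟨c ^ 2, ?_⟩
    rintro x ⟨⟨τ, hτ⟩, rfl⟩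
    exact hRbound τ hτ.1 hτ.2
  -- lower bound via two-point prior
  have hint1 : Integrable (fun y => (1 - δ y) ^ 2 * gaussPdf (y - c)) := by
    apply MSR.integrable_bg (M := 1) _ _ c
    · exact ((measurable_const.sub hδm).pow_const 2).aestronglyMeasurable
    · intro y
      have := (hδr y).1; have := (hδr y).2
      exact MSR.abs_sq_le_one (by linarith) (by linarith)
  have hint2 : Integrable (fun y => (δ y) ^ 2 * gaussPdf (y + c)) := by
    have h := MSR.integrable_bg (f := fun y => (δ y) ^ 2) (M := 1)
      ((hδm.pow_const 2).aestronglyMeasurable) ?_ (-c)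
    · apply h.congr
      filter_upwards with y
      rw [sub_neg_eq_add]
    · intro y
      have := (hδr y).1; have := (hδr y).2
      exact MSR.abs_sq_le_one (by linarith) (by linarith)
  have hcore : 2 * ρ c ≤ (∫ y : ℝ, (1 - δ y) ^ 2 * gaussPdf (y - c))
      + ∫ y : ℝ, (δ y) ^ 2 * gaussPdf (y + c) := by
    rw [MSR.rho_eq, MSR.pair_repr c c]
    rw [← integral_add hint1 hint2]
    apply integral_mono ?_ (hint1.add hint2) ?_
    · have h1 := MSR.integrable_qpow_g c 2 c
      have h2 : Integrable (fun y => (1 - MSR.q c y) ^ 2 * gaussPdf (y + c)) := by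
        have := MSR.refl2 c (-c)  -- just for integrability we redo:
        have h3 := MSR.integrable_bg (f := fun y => (1 - MSR.q c y) ^ 2) (M := 1)
          (((continuous_const.sub (MSR.continuous_q c)).pow 2).aestronglyMeasurable) ?_ (-c)
        · apply h3.congr
          filter_upwards with y
          rw [sub_neg_eq_add]
        · intro y
          exact MSR.abs_sq_le_one (by linarith [MSR.q_le_one c y]) (by linarith [MSR.q_pos c y])
      exact h1.add h2
    · intro y
      have := MSR.quad_min (s := 1 - δ y) (MSR.gaussPdf_pos (y - c)) (MSR.gaussPdf_pos (y + c))
        (MSR.q_weight c y)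
      calc MSR.q c y ^ 2 * gaussPdf (y - c) + (1 - MSR.q c y) ^ 2 * gaussPdf (y + c)
          ≤ (1 - δ y) ^ 2 * gaussPdf (y - c) + (1 - (1 - δ y)) ^ 2 * gaussPdf (y + c) := this
        _ = (1 - δ y) ^ 2 * gaussPdf (y - c) + (δ y) ^ 2 * gaussPdf (y + c) := by ring_nf
  have hRc : R δ c = c ^ 2 * ∫ y : ℝ, (1 - δ y) ^ 2 * gaussPdf (y - c) := by
    rw [R, if_pos hc0.le]
  have hRnegc : R δ (-c) = c ^ 2 * ∫ y : ℝ, (δ y) ^ 2 * gaussPdf (y + c) := by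
    rw [R, if_neg (by linarith)]
    have h1 : (∫ y : ℝ, ((0:ℝ) - δ y) ^ 2 * gaussPdf (y - -c))
        = ∫ y : ℝ, (δ y) ^ 2 * gaussPdf (y + c) := by
      apply integral_congr_ae
      filter_upwards with y
      rw [sub_neg_eq_add]
      ring_nf
    rw [h1]
    ring
  have hle1 := le_ciSup hbdd (⟨c, ⟨by linarith, le_refl c⟩⟩ : Set.Icc (-c) c)
  have hle2 := le_ciSup hbdd (⟨-c, ⟨le_refl (-c), by linarith⟩⟩ : Set.Icc (-c) c)
  have hsum : 2 * (c ^ 2 * ρ c) ≤ R δ c + R δ (-c) := by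
    rw [hRc, hRnegc]
    nlinarith [sq_nonneg c]
  simp only at hle1 hle2
  linarith
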